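/- Let V be a real vector space, let a : V → V → ℝ be a symmetric positive semidefinite bilinear form, let P ⊆ V be a finite-dimensional subspace, let K = {p ∈ P : a(p,q) = 0 for all q ∈ P} be the kernel of a restricted to P, and let b : V → V → ℝ be a symmetric bilinear form whose restriction to K is positive definite. Then for every v ∈ V there exists a unique element Πv ∈ P such that a(Πv, q) = a(v, q) for all q ∈ P and b(Πv, k) = b(v, k) for all k ∈ K. -/

import Mathlib

open Module LinearMap

private lemma cs_zero {V : Type*} [AddCommGroup V] [Module ℝ V]
    (a : LinearMap.BilinForm ℝ V)
    (ha_symm : ∀ v w : V, a v w = a w v)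
    (ha_psd : ∀ v : V, 0 ≤ a v v)
    (v w : V) (h : a v v = 0) : a w v = 0 := by
  by_contra h0
  set t : ℝ := -(a w w + 1) / (2 * a w v) with ht
  have hnonneg := ha_psd (w + t • v)
  have hexp : a (w + t • v) (w + t • v) = a w w + 2 * t * a w v := by
    simp only [map_add, map_smul, LinearMap.add_apply, LinearMap.smul_apply, smul_eq_mul]
    rw [ha_symm v w, h]; ring
  rw [hexp] at hnonneg
  have h2 : (2 : ℝ) * a w v ≠ 0 := by
    intro hc; exact h0 (by linarith [mul_eq_zero.mp hc |>.resolve_left (by norm_num)])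
  have h3 : 2 * t * a w v = -(a w w + 1) := by
    rw [ht]; field_simp
  linarith


/-- Abstract well-posedness of the VEM projection operators.
`a` is a symmetric positive semidefinite bilinear form, `P` a finite-dimensional
subspace, `K = {k ∈ P : a(k,q) = 0 ∀ q ∈ P}` the kernel of `a` restricted to `P`,
and `b` a symmetric bilinear form that is positive definite on `K`.  Then every
`v` has a unique projection `p ∈ P` with `a(p,q) = a(v,q)` for all `q ∈ P` and
`b(p,k) = b(v,k)` for all `k ∈ K`. -/
theorem stmt_0 {V : Type*} [AddCommGroup V] [Module ℝ V]
    (a b : LinearMap.BilinForm ℝ V)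
    (ha_symm : ∀ v w : V, a v w = a w v)
    (ha_psd : ∀ v : V, 0 ≤ a v v)
    (P : Submodule ℝ V) (hP : FiniteDimensional ℝ P)
    (hb_symm : ∀ v w : V, b v w = b w v)
    (hb_psd : ∀ k : V, k ∈ P → (∀ q ∈ P, a k q = 0) → 0 ≤ b k k)
    (hb_def : ∀ k : V, k ∈ P → (∀ q ∈ P, a k q = 0) → b k k = 0 → k = 0) :
    ∀ v : V, ∃! p : V, p ∈ P ∧ (∀ q ∈ P, a p q = a v q) ∧
      (∀ k : V, k ∈ P → (∀ q ∈ P, a k q = 0) → b p k = b v k) := by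
  intro v
  classical
  -- the restricted form A : P → Dual P
  set A : ↥P →ₗ[ℝ] Module.Dual ℝ ↥P := a.compl₁₂ P.subtype P.subtype with hA
  have hAapp : ∀ p q : ↥P, A p q = a (p : V) (q : V) := fun p q => rfl
  set K : Submodule ℝ ↥P := LinearMap.ker A with hK
  have hKmem : ∀ k : ↥P, k ∈ K ↔ ∀ q ∈ P, a (k : V) q = 0 := by
    intro k
    constructor
    · intro hk q hq
      have := congrFun (congrArg DFunLike.coe hk) ⟨q, hq⟩
      simpa [hAapp] using this
    · intro h
      ext q
      simpa [hAapp] using h (q : V) q.2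
  -- any k ∈ K satisfies a k k = 0, hence a w k = 0 for all w
  have hKzero : ∀ k : ↥P, k ∈ K → ∀ w : V, a w (k : V) = 0 := by
    intro k hk w
    exact cs_zero a ha_symm ha_psd _ w ((hKmem k).mp hk (k : V) k.2)
  -- range A = dualAnnihilator K
  have hle : LinearMap.range A ≤ K.dualAnnihilator := by
    rintro _ ⟨p, rfl⟩
    rw [Submodule.mem_dualAnnihilator]
    intro k hk
    rw [hAapp, ha_symm]
    rw [ha_symm]
    exact hKzero k hk _
  have hrange : LinearMap.range A = K.dualAnnihilator := by
    apply Submodule.eq_of_le_of_finrank_eq hle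
    have h1 : finrank ℝ (LinearMap.range A) + finrank ℝ K = finrank ℝ ↥P :=
      LinearMap.finrank_range_add_finrank_ker A
    have h2 : finrank ℝ (↥P ⧸ K) = finrank ℝ K.dualAnnihilator :=
      LinearEquiv.finrank_eq (Subspace.quotEquivAnnihilator K)
    have h3 : finrank ℝ (↥P ⧸ K) + finrank ℝ K = finrank ℝ ↥P :=
      Submodule.finrank_quotient_add_finrank K
    omega
  -- the functional q ↦ a v q lies in the annihilator of K
  have hf : ((a v).comp P.subtype) ∈ K.dualAnnihilator := by
    rw [Submodule.mem_dualAnnihilator]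
    intro k hk
    exact hKzero k hk v
  obtain ⟨p₀, hp₀⟩ : ∃ p₀ : ↥P, A p₀ = (a v).comp P.subtype := by
    rw [← hrange] at hf; exact hf
  have hp₀' : ∀ q ∈ P, a (p₀ : V) q = a v q := by
    intro q hq
    have := congrFun (congrArg DFunLike.coe hp₀) ⟨q, hq⟩
    simpa [hAapp] using this
  -- the restricted form B : K → Dual K
  set ι : ↥K →ₗ[ℝ] V := P.subtype.comp K.subtype with hι
  set B : ↥K →ₗ[ℝ] Module.Dual ℝ ↥K := b.compl₁₂ ι ι with hB
  have hBinj : Function.Injective B := by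
    rw [← LinearMap.ker_eq_bot]
    apply Submodule.eq_bot_iff _ |>.mpr
    intro k hk
    have hkk : b (ι k) (ι k) = 0 := by
      have := congrFun (congrArg DFunLike.coe hk) k
      simpa [hB] using this
    have hkP : (ι k : V) ∈ P := (k : ↥P).2
    have hkK : ∀ q ∈ P, a (ι k : V) q = 0 := (hKmem (k : ↥P)).mp k.2
    have : (ι k : V) = 0 := hb_def _ hkP hkK hkk
    have : (k : ↥P) = 0 := Subtype.ext this
    exact Subtype.ext this
  have hBsurj : Function.Surjective B := by
    have : FiniteDimensional ℝ ↥K := inferInstance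
    exact (LinearMap.injective_iff_surjective_of_finrank_eq_finrank
      (Subspace.dual_finrank_eq (V := ↥K)).symm).mp hBinj
  obtain ⟨k₀, hk₀⟩ := hBsurj ((b (v - (p₀ : V))).comp ι)
  have hk₀' : ∀ k : ↥K, b (ι k₀) (ι k) = b (v - (p₀ : V)) (ι k) := by
    intro k
    have := congrFun (congrArg DFunLike.coe hk₀) k
    simpa [hB] using this
  refine ⟨(p₀ : V) + (ι k₀ : V), ⟨?_, ?_, ?_⟩, ?_⟩
  · exact P.add_mem p₀.2 (k₀ : ↥P).2
  · intro q hq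
    have h1 : a (ι k₀ : V) q = 0 := (hKmem (k₀ : ↥P)).mp k₀.2 q hq
    rw [map_add, LinearMap.add_apply, h1, add_zero]
    exact hp₀' q hq
  · intro k hkP hkK
    have hkmem : (⟨⟨k, hkP⟩, (hKmem ⟨k, hkP⟩).mpr hkK⟩ : ↥K) ∈ (⊤ : Submodule ℝ ↥K) := trivial
    have := hk₀' ⟨⟨k, hkP⟩, (hKmem ⟨k, hkP⟩).mpr hkK⟩
    simp only [hι, LinearMap.comp_apply, Submodule.coe_subtype] at this ⊢
    have hsub : b (v - (p₀ : V)) k = b v k - b (p₀ : V) k := by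
      simp [map_sub]
    have hp₀k : b (p₀ : V) k = b (↑p₀ + ι k₀) k - b (ι k₀) k := by
      simp [map_add]
    rw [map_add, LinearMap.add_apply]
    have := hk₀' ⟨⟨k, hkP⟩, (hKmem ⟨k, hkP⟩).mpr hkK⟩
    simp only [hι, LinearMap.comp_apply, Submodule.coe_subtype] at this
    rw [this, hsub]; ring
  · rintro p ⟨hpP, hpa, hpb⟩
    -- uniqueness
    set d : V := p - ((p₀ : V) + (ι k₀ : V)) with hd
    have hdP : d ∈ P := P.sub_mem hpP (P.add_mem p₀.2 (k₀ : ↥P).2)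
    have hda : ∀ q ∈ P, a d q = 0 := by
      intro q hq
      have h1 : a (ι k₀ : V) q = 0 := (hKmem (k₀ : ↥P)).mp k₀.2 q hq
      simp only [hd, map_sub, map_add, LinearMap.sub_apply, LinearMap.add_apply, h1]
      rw [hpa q hq, hp₀' q hq]; ring
    have hdb : b d d = 0 := by
      have h1 : b p d = b v d := hpb d hdP hda
      have h2 : b ((p₀ : V) + (ι k₀ : V)) d = b v d := by
        have hk₀k : b (ι k₀) d = b (v - (p₀ : V)) d := hk₀' ⟨⟨d, hdP⟩, (hKmem ⟨d, hdP⟩).mpr hda⟩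
        rw [map_add, LinearMap.add_apply, hk₀k]
        simp [map_sub]
      have hfun : b d = b p - b ((p₀ : V) + (ι k₀ : V)) := by rw [hd, map_sub]
      have : b d d = b p d - b ((p₀ : V) + (ι k₀ : V)) d := by rw [hfun]; simp
      rw [this, h1, h2, sub_self]
    exact sub_eq_zero.mp (hb_def d hdP hda hdb)
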